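/- For a vector f = (c_j)_{j∈ℕ} ∈ D(N), the following are equivalent: (1) Φf ∈ D(N) (so that f ∈ D([Φ,N])) and ΦNf − NΦf = i·f; (2) Σ_{j∈ℕ} (−1)^j c_j = 0 (this series converges absolutely since f ∈ D(N)). -/

import Mathlib

noncomputable section

open MeasureTheory Complex Real AddCircle ContinuousLinearMap
open scoped ENNReal NNReal

namespace GW

/-- The Hilbert space `H = ℓ²(ℕ, ℂ)`. -/
abbrev H : Type := lp (fun _ : ℕ => ℂ) 2

instance fact2pi : Fact (0 < 2 * Real.pi) := ⟨by positivity⟩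

/-- The circle `𝕋`, realized as `ℝ / 2πℤ`; the point `θ` corresponds to `e^{iθ}`. -/
abbrev Circle2 : Type := AddCircle (2 * Real.pi)

/-- Normalized Lebesgue (Haar) measure `dθ/2π` on the circle. -/
abbrev μT : Measure Circle2 := @AddCircle.haarAddCircle (2 * Real.pi) fact2pi

/-- `L²(𝕋)` with respect to normalized Lebesgue measure. -/
abbrev L2T : Type := MeasureTheory.Lp ℂ 2 μT

/-- Extension of an `ℕ`-indexed coefficient sequence to `ℤ` by zero. -/
def extz (f : ℕ → ℂ) : ℤ → ℂ := fun n => if 0 ≤ n then f n.toNat else 0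

lemma extz_natCast (f : ℕ → ℂ) (n : ℕ) : extz f (n : ℤ) = f n := by
  simp [extz]

lemma extz_memℓp (f : H) : Memℓp (extz ⇑f) 2 := by
  apply memℓp_gen
  have hs : Summable fun n : ℕ => ‖(⇑f) n‖ ^ (2 : ℝ≥0∞).toReal :=
    (lp.memℓp f).summable (by norm_num)
  have h0 : ∀ z : ℤ, z ∉ Set.range ((↑·) : ℕ → ℤ) →
      ‖extz ⇑f z‖ ^ (2 : ℝ≥0∞).toReal = 0 := by
    intro z hz
    have hneg : ¬ (0 : ℤ) ≤ z := fun h => hz ⟨z.toNat, by simpa using Int.toNat_of_nonneg h⟩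
    simp only [extz, if_neg hneg, norm_zero]
    rw [Real.zero_rpow (by norm_num)]
  have hinj : Function.Injective ((↑·) : ℕ → ℤ) := fun a b h => by simpa using h
  refine (hinj.summable_iff h0).mp ?_
  refine hs.congr fun n => ?_
  simp [Function.comp, extz_natCast]

/-- The zero-extension `ℓ²(ℕ,ℂ) → ℓ²(ℤ,ℂ)`. -/
def extlp (f : H) : lp (fun _ : ℤ => ℂ) 2 := ⟨extz ⇑f, extz_memℓp f⟩

/-- `J` as a plain function: send `(c_n)_{n∈ℕ}` to `Σ_{n∈ℕ} c_n e^{inθ}` in `L²(𝕋)`,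
via the Fourier Hilbert basis of `L²(𝕋)`. -/
def Jmap (f : H) : L2T := (@fourierBasis (2 * Real.pi) fact2pi).repr.symm (extlp f)

lemma extlp_add (f g : H) : extlp (f + g) = extlp f + extlp g := by
  apply Subtype.ext
  funext n
  show extz (⇑(f + g)) n = extz ⇑f n + extz ⇑g n
  rcases le_or_gt 0 n with h | h
  · simp only [extz, if_pos h]
    exact congrFun (lp.coeFn_add f g) n.toNat
  · simp [extz, if_neg (not_le.mpr h)]

lemma extlp_smul (c : ℂ) (f : H) : extlp (c • f) = c • extlp f := by
  apply Subtype.ext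
  funext n
  show extz (⇑(c • f)) n = c • extz ⇑f n
  rcases le_or_gt 0 n with h | h
  · simp only [extz, if_pos h]
    rw [lp.coeFn_smul]
    rfl
  · simp [extz, if_neg (not_le.mpr h)]

/-- `J` as a linear map. -/
def Jlin : H →ₗ[ℂ] L2T where
  toFun := Jmap
  map_add' f g := show Jmap (f + g) = Jmap f + Jmap g by
    unfold Jmap; rw [extlp_add, map_add]
  map_smul' c f := show Jmap (c • f) = c • Jmap f by
    unfold Jmap; rw [extlp_smul, _root_.map_smul]

lemma norm_extlp (f : H) : ‖extlp f‖ = ‖f‖ := by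
  rw [lp.norm_eq_tsum_rpow (by norm_num : 0 < (2 : ℝ≥0∞).toReal) (extlp f),
    lp.norm_eq_tsum_rpow (by norm_num : 0 < (2 : ℝ≥0∞).toReal) f]
  congr 1
  have hinj : Function.Injective ((↑·) : ℕ → ℤ) := fun a b h => by simpa using h
  have h0 : ∀ z, z ∉ Set.range ((↑·) : ℕ → ℤ) →
      ‖extlp f z‖ ^ (2 : ℝ≥0∞).toReal = 0 := by
    intro z hz
    have hneg : ¬ (0 : ℤ) ≤ z := fun h => hz ⟨z.toNat, by simpa using Int.toNat_of_nonneg h⟩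
    show ‖extz ⇑f z‖ ^ (2 : ℝ≥0∞).toReal = 0
    simp only [extz, if_neg hneg, norm_zero]
    rw [Real.zero_rpow (by norm_num)]
  have hsupp : (Function.support fun z => ‖extlp f z‖ ^ (2 : ℝ≥0∞).toReal) ⊆
      Set.range ((↑·) : ℕ → ℤ) := by
    intro z hz
    by_contra h
    exact hz (h0 z h)
  have key := hinj.tsum_eq (f := fun z => ‖extlp f z‖ ^ (2 : ℝ≥0∞).toReal) hsupp
  rw [← key]
  exact tsum_congr fun n => by
    show ‖extz ⇑f (n : ℤ)‖ ^ (2 : ℝ≥0∞).toReal = _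
    rw [extz_natCast]

/-- The isometric embedding `J : H → L²(𝕋)` as a continuous linear map; it maps the `n`-th
standard basis vector of `ℓ²(ℕ,ℂ)` to `θ ↦ e^{inθ}`, `n ∈ ℕ`. -/
def JH : H →L[ℂ] L2T :=
  LinearMap.mkContinuousOfExistsBound Jlin
    ⟨1, fun f => by
      simp only [Jlin, LinearMap.coe_mk, AddHom.coe_mk, one_mul, Jmap]
      rw [LinearIsometryEquiv.norm_map]
      exact le_of_eq (norm_extlp f)⟩

end GW

namespace GW

/-- The argument function on the circle: `e^{iθ} ↦ θ` with `θ ∈ (−π, π]`, as a `ℂ`-valued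
function. -/
def argFun : Circle2 → ℂ :=
  fun x => (((AddCircle.measurableEquivIoc (2 * Real.pi) (-Real.pi) x : Set.Ioc (-Real.pi) (-Real.pi + 2 * Real.pi)) : ℝ) : ℂ)

lemma argFun_memℒp : MemLp argFun ⊤ μT := by
  apply memLp_top_of_bound (C := Real.pi)
  · exact (Complex.measurable_ofReal.comp (measurable_subtype_coe.comp
      (AddCircle.measurableEquivIoc (2 * Real.pi) (-Real.pi)).measurable)).aestronglyMeasurable
  · refine Filter.Eventually.of_forall fun x => ?_
    have h := (AddCircle.measurableEquivIoc (2 * Real.pi) (-Real.pi) x).2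
    have h1 : -Real.pi < ((AddCircle.measurableEquivIoc (2 * Real.pi) (-Real.pi) x : Set.Ioc (-Real.pi) (-Real.pi + 2 * Real.pi)) : ℝ) := h.1
    have h2 := h.2
    rw [argFun, Complex.norm_real, Real.norm_eq_abs, abs_le]
    constructor
    · linarith
    · linarith

lemma mul_memℒp (φ : Circle2 → ℂ) (hφ : MemLp φ ⊤ μT) (f : L2T) : MemLp (φ • ⇑f) 2 μT :=
  (Lp.memLp f).smul hφ

lemma mul_toLp_add (φ : Circle2 → ℂ) (hφ : MemLp φ ⊤ μT) (f g : L2T) :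
    (mul_memℒp φ hφ (f + g)).toLp (φ • ⇑(f + g)) =
      (mul_memℒp φ hφ f).toLp (φ • ⇑f) + (mul_memℒp φ hφ g).toLp (φ • ⇑g) := by
  rw [MemLp.toLp_congr (mul_memℒp φ hφ (f + g)) ((mul_memℒp φ hφ f).add (mul_memℒp φ hφ g))
    ((Lp.coeFn_add f g).mono fun x hx => by
      simp only [Pi.smul_apply', hx, Pi.add_apply, smul_add])]
  exact MemLp.toLp_add _ _

lemma mul_toLp_smul (φ : Circle2 → ℂ) (hφ : MemLp φ ⊤ μT) (c : ℂ) (f : L2T) :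
    (mul_memℒp φ hφ (c • f)).toLp (φ • ⇑(c • f)) = c • (mul_memℒp φ hφ f).toLp (φ • ⇑f) := by
  rw [MemLp.toLp_congr (mul_memℒp φ hφ (c • f)) ((mul_memℒp φ hφ f).const_smul c)
    ((Lp.coeFn_smul c f).mono fun x hx => by
      rw [Pi.smul_apply', hx, Pi.smul_apply, Pi.smul_apply, Pi.smul_apply', smul_comm])]
  exact MemLp.toLp_const_smul c _

/-- Multiplication by a bounded measurable function, as a linear map on `L²(𝕋)`. -/
def mulLin (φ : Circle2 → ℂ) (hφ : MemLp φ ⊤ μT) : L2T →ₗ[ℂ] L2T where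
  toFun f := (mul_memℒp φ hφ f).toLp (φ • ⇑f)
  map_add' f g := mul_toLp_add φ hφ f g
  map_smul' c f := mul_toLp_smul φ hφ c f

/-- Multiplication by a bounded measurable function, as a bounded operator on `L²(𝕋)`. -/
def mulCLM (φ : Circle2 → ℂ) (hφ : MemLp φ ⊤ μT) : L2T →L[ℂ] L2T :=
  LinearMap.mkContinuousOfExistsBound (mulLin φ hφ)
    ⟨(eLpNorm φ ⊤ μT).toReal, fun f => by
      simp only [mulLin, LinearMap.coe_mk, AddHom.coe_mk]
      rw [Lp.norm_toLp, Lp.norm_def]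
      rw [← ENNReal.toReal_mul]
      apply ENNReal.toReal_mono
      · exact ENNReal.mul_ne_top hφ.eLpNorm_ne_top (Lp.memLp f).eLpNorm_ne_top
      · exact eLpNorm_smul_le_mul_eLpNorm (Lp.memLp f).1 hφ.1⟩

/-- The Garrison–Wong phase operator `Φ = J* ∘ M_arg ∘ J` on `H`. -/
def Phi : H →L[ℂ] H :=
  (ContinuousLinearMap.adjoint JH) ∘L (mulCLM argFun argFun_memℒp) ∘L JH

/-- The domain of the number operator: `{f ∈ H : Σ n² |c_n|² < ∞}`. -/
def domN : Set H := {f : H | Summable fun n : ℕ => (n : ℝ) ^ 2 * ‖f n‖ ^ 2}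

lemma Nop_memℓp {f : H} (hf : f ∈ domN) : Memℓp (fun n : ℕ => (n : ℂ) * f n) 2 := by
  apply memℓp_gen
  refine Summable.congr hf fun n => ?_
  have h2 : ((2 : ℝ≥0∞)).toReal = ((2 : ℕ) : ℝ) := by norm_num
  rw [h2, Real.rpow_natCast]
  simp [norm_mul, mul_pow]

/-- The number operator `N`, defined on its maximal domain `domN`: `(Nf)_n = n·c_n`. -/
def Nop (f : H) (hf : f ∈ domN) : H := ⟨fun n : ℕ => (n : ℂ) * f n, Nop_memℓp hf⟩

/-- The standard orthonormal basis `(e_n)` of `H`. -/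
def eH (n : ℕ) : H := lp.single 2 n (1 : ℂ)

lemma norm_exp_mul (x : ℝ) (c : ℂ) : ‖Complex.exp ((x : ℂ) * Complex.I) * c‖ = ‖c‖ := by
  rw [norm_mul, Complex.norm_exp_ofReal_mul_I, one_mul]

lemma U_memℓp (t : ℝ) (f : H) : Memℓp (fun n : ℕ => Complex.exp (((n * t : ℝ) : ℂ) * Complex.I) * f n) 2 := by
  apply memℓp_gen
  refine Summable.congr ((lp.memℓp f).summable (by norm_num)) fun n => ?_
  rw [norm_exp_mul]

/-- The unitary group `U_t = e^{itN}`: `(U_t f)_n = e^{int} f_n`, as a linear map. -/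
def Ulin (t : ℝ) : H →ₗ[ℂ] H where
  toFun f := ⟨fun n : ℕ => Complex.exp (((n * t : ℝ) : ℂ) * Complex.I) * f n, U_memℓp t f⟩
  map_add' f g := by
    apply Subtype.ext
    funext n
    show Complex.exp _ * (⇑(f + g)) n = _
    rw [lp.coeFn_add]
    show Complex.exp _ * (f n + g n) =
      Complex.exp _ * f n + Complex.exp _ * g n
    ring
  map_smul' c f := by
    apply Subtype.ext
    funext n
    show Complex.exp _ * (⇑(c • f)) n = _
    rw [lp.coeFn_smul]
    show Complex.exp _ * (c * f n) = c * (Complex.exp _ * f n)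
    ring

/-- The unitary group `U_t = e^{itN}`: `(U_t f)_n = e^{int} f_n`. -/
def U (t : ℝ) : H →L[ℂ] H :=
  LinearMap.mkContinuousOfExistsBound (Ulin t)
    ⟨1, fun f => by
      simp only [Ulin, LinearMap.coe_mk, AddHom.coe_mk, one_mul]
      apply le_of_eq
      rw [lp.norm_eq_tsum_rpow (by norm_num : 0 < (2 : ℝ≥0∞).toReal),
        lp.norm_eq_tsum_rpow (by norm_num : 0 < (2 : ℝ≥0∞).toReal) f]
      congr 1
      refine tsum_congr fun n => ?_
      show ‖Complex.exp (((n * t : ℝ) : ℂ) * Complex.I) * f n‖ ^ (2 : ℝ≥0∞).toReal = _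
      rw [norm_exp_mul]⟩

/-- The indicator function of a subset of the circle, as a `ℂ`-valued function. -/
def indFun (B : Set Circle2) : Circle2 → ℂ := Set.indicator B (fun _ => (1 : ℂ))

lemma indFun_memℒp {B : Set Circle2} (hB : MeasurableSet B) : MemLp (indFun B) ⊤ μT := by
  apply memLp_top_of_bound (C := 1)
  · exact (aestronglyMeasurable_const.indicator hB)
  · refine Filter.Eventually.of_forall fun x => ?_
    by_cases h : x ∈ B <;> simp [indFun, h]

open scoped Classical in
/-- The POVM `Q(B) = J* ∘ M_{1_B} ∘ J` obtained by compressing multiplication by the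
indicator of `B` to `H` (defined to be `0` for non-measurable `B`). -/
def Qop (B : Set Circle2) : H →L[ℂ] H :=
  if h : MeasurableSet B then
    (ContinuousLinearMap.adjoint JH) ∘L (mulCLM (indFun B) (indFun_memℒp h)) ∘L JH
  else 0


/-! ### Auxiliary material for the Heisenberg relation -/

/-- Fourier coefficients of the argument function: `A k = i(−1)^k/k` for `k ≠ 0`, `A 0 = 0`. -/
def A (k : ℤ) : ℂ := if k = 0 then 0 else Complex.I * (-1 : ℂ) ^ k / k

lemma neg_one_zpow_mul_self (k : ℤ) : ((-1 : ℂ) ^ k) * ((-1 : ℂ) ^ k) = 1 := by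
  rw [← mul_zpow]; norm_num

lemma exp_c_pi (k : ℤ) (s : ℝ) (hs : s = Real.pi ∨ s = -Real.pi) :
    Complex.exp (-Complex.I * k * s) = (-1 : ℂ) ^ k := by
  rcases hs with rfl | rfl
  · have h : (-Complex.I * k * (Real.pi : ℂ)) = ((-k : ℤ) : ℂ) * ((Real.pi : ℂ) * Complex.I) := by
      push_cast; ring
    rw [h, Complex.exp_int_mul, Complex.exp_pi_mul_I, zpow_neg]
    exact inv_eq_of_mul_eq_one_left (neg_one_zpow_mul_self k)
  · have h : (-Complex.I * k * ((-Real.pi : ℝ) : ℂ)) = ((k : ℤ) : ℂ) * ((Real.pi : ℂ) * Complex.I) := by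
      push_cast; ring
    rw [h, Complex.exp_int_mul, Complex.exp_pi_mul_I]

lemma integral_x_exp (k : ℤ) (hk : k ≠ 0) :
    (∫ x in (-Real.pi)..Real.pi, (x : ℂ) * Complex.exp (-Complex.I * k * x)) =
      2 * (Real.pi : ℂ) * (-1 : ℂ) ^ k * Complex.I / k := by
  set c : ℂ := -Complex.I * k with hc
  have hkc : ((k : ℂ)) ≠ 0 := Int.cast_ne_zero.mpr hk
  have hc0 : c ≠ 0 := by
    simp only [hc, neg_mul, neg_ne_zero]
    exact mul_ne_zero Complex.I_ne_zero hkc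
  have hG : ∀ z : ℂ, HasDerivAt (fun z : ℂ => (z / c - 1 / c ^ 2) * Complex.exp (c * z))
      (z * Complex.exp (c * z)) z := by
    intro z
    have hz : HasDerivAt (fun z : ℂ => z / c - 1 / c ^ 2) (1 / c) z := by
      have := ((hasDerivAt_id z).div_const c).sub_const (1 / c ^ 2)
      simpa [one_div] using this
    have hcz : HasDerivAt (fun z : ℂ => c * z) c z := by
      simpa using (hasDerivAt_id z).const_mul c
    have he : HasDerivAt (fun z : ℂ => Complex.exp (c * z)) (Complex.exp (c * z) * c) z :=
      hcz.cexp
    have := hz.mul he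
    refine this.congr_deriv ?_
    field_simp
    ring
  have hF : ∀ x : ℝ, HasDerivAt (fun x : ℝ => (((x : ℂ)) / c - 1 / c ^ 2) * Complex.exp (c * x))
      ((x : ℂ) * Complex.exp (c * x)) x := fun x => (hG (x : ℂ)).comp_ofReal
  have hcont : Continuous fun x : ℝ => (x : ℂ) * Complex.exp (c * x) := by
    continuity
  have hFTC := intervalIntegral.integral_eq_sub_of_hasDerivAt (a := -Real.pi) (b := Real.pi)
    (f := fun x : ℝ => (((x : ℂ)) / c - 1 / c ^ 2) * Complex.exp (c * x))
    (fun x _ => hF x) (hcont.intervalIntegrable _ _)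
  have h1 : Complex.exp (c * (Real.pi : ℂ)) = (-1 : ℂ) ^ k := by
    rw [hc, show -Complex.I * (k:ℂ) * (Real.pi:ℂ) = -Complex.I * k * ((Real.pi : ℝ) : ℂ) by norm_num]
    exact exp_c_pi k Real.pi (Or.inl rfl)
  have h2 : Complex.exp (c * (((-Real.pi : ℝ)) : ℂ)) = (-1 : ℂ) ^ k := by
    rw [hc]
    exact exp_c_pi k (-Real.pi) (Or.inr rfl)
  rw [hFTC]
  simp only [h1, h2]
  push_cast
  rw [hc]
  have hI := Complex.I_ne_zero
  field_simp
  ring_nf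
  rw [show (Complex.I) ^ 3 = Complex.I * Complex.I ^ 2 by ring, Complex.I_sq]
  ring

lemma hasSum_congr_fun {α β : Type*} [AddCommMonoid β] [TopologicalSpace β] {f g : α → β}
    {a : β} (h : ∀ n, f n = g n) (hf : HasSum f a) : HasSum g a :=
  (funext h : f = g) ▸ hf

lemma argFun_eq : argFun = AddCircle.liftIoc (2 * Real.pi) (-Real.pi) (fun x : ℝ => (x : ℂ)) :=
  rfl

lemma fourierCoeff_argFun (k : ℤ) : fourierCoeff argFun k = A k := by
  have hπ : (Real.pi : ℂ) ≠ 0 := Complex.ofReal_ne_zero.mpr Real.pi_ne_zero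
  rw [argFun_eq, fourierCoeff_liftIoc_eq, fourierCoeffOn_eq_integral]
  have hcong : (∫ x in (-Real.pi)..(-Real.pi + 2 * Real.pi),
        fourier (-k) (x : AddCircle (-Real.pi + 2 * Real.pi - -Real.pi)) • ((x : ℝ) : ℂ))
      = ∫ x in (-Real.pi)..(-Real.pi + 2 * Real.pi),
        (x : ℂ) * Complex.exp (-Complex.I * k * x) := by
    refine intervalIntegral.integral_congr fun x hx => ?_
    rw [fourier_coe_apply, smul_eq_mul, mul_comm]
    congr 2
    push_cast
    field_simp
    ring
  rw [hcong]
  rw [show (-Real.pi + 2 * Real.pi : ℝ) = Real.pi by ring,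
    show (Real.pi - -Real.pi : ℝ) = 2 * Real.pi by ring]
  rcases eq_or_ne k 0 with rfl | hk
  · have : (∫ x in (-Real.pi)..Real.pi, (x : ℂ) * Complex.exp (-Complex.I * (0 : ℤ) * x)) =
        ∫ x in (-Real.pi)..Real.pi, ((x : ℝ) : ℂ) := by
      refine intervalIntegral.integral_congr fun x hx => ?_
      simp
    rw [this, intervalIntegral.integral_ofReal, integral_id]
    simp [A]
  · rw [integral_x_exp k hk, A, if_neg hk, Complex.real_smul]
    have hkc : ((k : ℂ)) ≠ 0 := Int.cast_ne_zero.mpr hk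
    push_cast
    field_simp [hπ, hkc]

lemma norm_A_le (k : ℤ) : ‖A k‖ ≤ 1 := by
  rcases eq_or_ne k 0 with rfl | hk
  · simp [A]
  · rw [A, if_neg hk, norm_div, norm_mul, Complex.norm_I, one_mul]
    have h1 : ‖(-1 : ℂ) ^ k‖ = 1 := by
      rw [norm_zpow]; norm_num
    rw [h1]
    have h2 : (1 : ℝ) ≤ ‖(k : ℂ)‖ := by
      rw [Complex.norm_intCast]
      exact_mod_cast Int.one_le_abs hk
    rw [div_le_one (lt_of_lt_of_le one_pos h2)]
    exact h2

/-- Coefficient extraction via the inner product with the standard basis. -/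
lemma coeff_eq_inner (x : H) (n : ℕ) : x n = inner (𝕜 := ℂ) (eH n) x := by
  classical
  rw [eH, lp.inner_single_left]
  simp

lemma JH_apply (f : H) : JH f = (@fourierBasis (2 * Real.pi) fact2pi).repr.symm (extlp f) := rfl

lemma JH_eH (n : ℕ) : JH (eH n) = @fourierBasis (2 * Real.pi) fact2pi (n : ℤ) := by
  classical
  rw [JH_apply]
  have h : extlp (eH n) = lp.single (E := fun _ : ℤ => ℂ) 2 (n : ℤ) (1 : ℂ) := by
    apply Subtype.ext
    funext z
    change extz (⇑(eH n)) z = _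
    rcases le_or_gt 0 z with hz | hz
    · rw [show z = ((z.toNat : ℕ) : ℤ) by simpa using (Int.toNat_of_nonneg hz).symm,
        extz_natCast]
      rcases eq_or_ne z.toNat n with he | he
      · subst he
        rw [eH, lp.single_apply_self, lp.single_apply_self]
      · rw [eH, lp.single_apply_ne _ _ _ he,
          lp.single_apply_ne _ _ _ (fun hc => he (by exact_mod_cast hc))]
    · have h1 : extz (⇑(eH n)) z = 0 := by simp [extz, not_le.mpr hz]
      rw [h1, lp.single_apply_ne _ _ _ (by omega : z ≠ (n : ℤ))]
  rw [h]
  have hrs := (@fourierBasis (2 * Real.pi) fact2pi).repr_self (n : ℤ)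
  rw [← hrs, LinearIsometryEquiv.symm_apply_apply]

lemma hasSum_Jmap (f : H) :
    HasSum (fun m : ℕ => f m • (@fourierBasis (2 * Real.pi) fact2pi (m : ℤ))) (JH f) := by
  classical
  have h0 : HasSum (fun z : ℤ => lp.single (E := fun _ : ℤ => ℂ) 2 z (extlp f z)) (extlp f) :=
    lp.hasSum_single ENNReal.ofNat_ne_top (extlp f)
  have hinj : Function.Injective ((↑·) : ℕ → ℤ) := fun a b h => by simpa using h
  have hvanish : ∀ z : ℤ, z ∉ Set.range ((↑·) : ℕ → ℤ) →
      lp.single (E := fun _ : ℤ => ℂ) 2 z (extlp f z) = 0 := by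
    intro z hz
    have hneg : ¬ (0 : ℤ) ≤ z := fun h => hz ⟨z.toNat, by simpa using Int.toNat_of_nonneg h⟩
    have hez : extlp f z = 0 := by
      show extz (⇑f) z = 0
      simp [extz, hneg]
    rw [hez]
    have h00 : (0 : ℂ) = (0 : ℂ) • (1 : ℂ) := by simp
    rw [h00, lp.single_smul, zero_smul]
  have h1 : HasSum (fun m : ℕ => lp.single (E := fun _ : ℤ => ℂ) 2 ((m : ℕ) : ℤ)
      (extlp f ((m : ℕ) : ℤ))) (extlp f) :=
    (Function.Injective.hasSum_iff hinj hvanish).mpr h0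
  have h2 : HasSum (fun m : ℕ => lp.single (E := fun _ : ℤ => ℂ) 2 ((m : ℕ) : ℤ) (f m))
      (extlp f) :=
    hasSum_congr_fun (fun m => by congr 1) h1
  have h3 := (((@fourierBasis (2 * Real.pi)
      fact2pi).repr.symm.toContinuousLinearEquiv :
        lp (fun _ : ℤ => ℂ) 2 ≃L[ℂ] L2T).toContinuousLinearMap).hasSum h2
  have h4 : HasSum (fun m : ℕ => (@fourierBasis (2 * Real.pi) fact2pi).repr.symm
      (lp.single (E := fun _ : ℤ => ℂ) 2 ((m : ℕ) : ℤ) (f m))) (JH f) := by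
    rw [JH_apply]
    exact h3
  refine hasSum_congr_fun (fun m => ?_) h4
  have hs : lp.single (E := fun _ : ℤ => ℂ) 2 ((m : ℕ) : ℤ) (f m)
      = f m • lp.single (E := fun _ : ℤ => ℂ) 2 ((m : ℕ) : ℤ) (1 : ℂ) := by
    rw [← lp.single_smul]
    congr 1
    simp
  rw [hs, LinearIsometryEquiv.map_smul]
  congr 1
  rw [← (@fourierBasis (2 * Real.pi) fact2pi).repr_self ((m : ℕ) : ℤ),
    LinearIsometryEquiv.symm_apply_apply]

lemma fourierCoeff_congr_ae {g h : Circle2 → ℂ} (hgh : g =ᵐ[μT] h) (n : ℤ) :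
    fourierCoeff g n = fourierCoeff h n := by
  unfold fourierCoeff
  exact integral_congr_ae (hgh.mono fun x hx => by dsimp only; rw [hx])

lemma mulCLM_coeFn (φ : Circle2 → ℂ) (hφ : MemLp φ ⊤ μT) (g : L2T) :
    ⇑(mulCLM φ hφ g) =ᵐ[μT] φ • ⇑g :=
  (mul_memℒp φ hφ g).coeFn_toLp

lemma fourierCoeff_arg_fourier (n m : ℤ) :
    fourierCoeff (fun x : Circle2 => argFun x * fourier m x) n = A (n - m) := by
  rw [← fourierCoeff_argFun (n - m)]
  unfold fourierCoeff
  refine integral_congr_ae (Filter.Eventually.of_forall fun x => ?_)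
  dsimp only
  have h : (-(n - m)) = -n + m := by ring
  rw [h, fourier_add]
  simp only [smul_eq_mul]
  ring

/-- The key formula: the `n`-th coefficient of `Φf` is `Σ_m A(n−m) c_m`. -/
lemma hasSum_Phi (f : H) (n : ℕ) :
    HasSum (fun m : ℕ => A ((n : ℤ) - m) * f m) (Phi f n) := by
  classical
  have hLn : ∀ g : L2T,
      inner (𝕜 := ℂ) (@fourierBasis (2 * Real.pi) fact2pi (n : ℤ))
        (mulCLM argFun argFun_memℒp g)
        = fourierCoeff (argFun • ⇑g : Circle2 → ℂ) (n : ℤ) := by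
    intro g
    rw [← HilbertBasis.repr_apply_apply, fourierBasis_repr]
    exact fourierCoeff_congr_ae (mulCLM_coeFn argFun argFun_memℒp g) _
  have hPhin : Phi f n
      = inner (𝕜 := ℂ) (@fourierBasis (2 * Real.pi) fact2pi (n : ℤ))
          (mulCLM argFun argFun_memℒp (JH f)) := by
    rw [coeff_eq_inner (Phi f) n]
    have hP : Phi f = (ContinuousLinearMap.adjoint JH)
        (mulCLM argFun argFun_memℒp (JH f)) := rfl
    rw [hP, ContinuousLinearMap.adjoint_inner_right, JH_eH]
  have hsum := (((innerSL ℂ (@fourierBasis (2 * Real.pi) fact2pi (n : ℤ))) ∘L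
      (mulCLM argFun argFun_memℒp)) : L2T →L[ℂ] ℂ).hasSum (hasSum_Jmap f)
  have hLnapp : ∀ g : L2T, ((innerSL ℂ (@fourierBasis (2 * Real.pi) fact2pi (n : ℤ))) ∘L
      (mulCLM argFun argFun_memℒp)) g
        = inner (𝕜 := ℂ) (@fourierBasis (2 * Real.pi) fact2pi (n : ℤ))
            (mulCLM argFun argFun_memℒp g) := by
    intro g
    rw [ContinuousLinearMap.comp_apply, innerSL_apply_apply]
  rw [hPhin, ← hLnapp (JH f)]
  refine hasSum_congr_fun (fun m => ?_) hsum
  rw [ContinuousLinearMap.map_smul, smul_eq_mul, hLnapp, hLn]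
  have hbm : (⇑(@fourierBasis (2 * Real.pi) fact2pi ((m : ℕ) : ℤ)) : Circle2 → ℂ)
      =ᵐ[μT] fourier ((m : ℕ) : ℤ) := by
    rw [show (@fourierBasis (2 * Real.pi) fact2pi ((m : ℕ) : ℤ))
        = fourierLp (T := 2 * Real.pi) 2 ((m : ℕ) : ℤ) from
      congrFun (coe_fourierBasis (T := 2 * Real.pi)) ((m : ℕ) : ℤ)]
    exact coeFn_fourierLp 2 ((m : ℕ) : ℤ)
  have h1 : fourierCoeff (argFun • ⇑(@fourierBasis (2 * Real.pi) fact2pi ((m : ℕ) : ℤ))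
        : Circle2 → ℂ) (n : ℤ)
      = fourierCoeff (fun x : Circle2 => argFun x * fourier ((m : ℕ) : ℤ) x) (n : ℤ) := by
    refine fourierCoeff_congr_ae (hbm.mono fun x hx => ?_) _
    exact congrArg (fun t => argFun x * t) hx
  rw [h1, fourierCoeff_arg_fourier]
  ring

lemma summable_norm_of_domN {f : H} (hf : f ∈ domN) : Summable fun m : ℕ => ‖f m‖ := by
  rw [← summable_nat_add_iff 1]
  have h1 : Summable fun m : ℕ => ((m : ℝ) + 1) ^ 2 * ‖f (m + 1)‖ ^ 2 := by
    have h := (summable_nat_add_iff (f := fun n : ℕ => (n : ℝ) ^ 2 * ‖f n‖ ^ 2) 1).mpr hf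
    exact h.congr fun m => by push_cast; ring
  have h2 : Summable fun m : ℕ => (1 : ℝ) / ((m : ℝ) + 1) ^ 2 := by
    have h := (summable_nat_add_iff
      (f := fun n : ℕ => (1 : ℝ) / (n : ℝ) ^ 2) 1).mpr
      (Real.summable_one_div_nat_pow.mpr one_lt_two)
    exact h.congr fun m => by push_cast; ring_nf
  refine Summable.of_nonneg_of_le (fun m => norm_nonneg _) (fun m => ?_) (h2.add h1)
  have hm : (0 : ℝ) < (m : ℝ) + 1 := by positivity
  have hsq := sq_nonneg (1 / ((m : ℝ) + 1) - ((m : ℝ) + 1) * ‖f (m + 1)‖)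
  have hinv : (1 / ((m : ℝ) + 1)) * (((m : ℝ) + 1) * ‖f (m + 1)‖) = ‖f (m + 1)‖ := by
    field_simp
  have h1m : (1 / ((m : ℝ) + 1)) ^ 2 = 1 / ((m : ℝ) + 1) ^ 2 := by
    rw [div_pow, one_pow]
  nlinarith [norm_nonneg (f (m + 1))]

lemma summable_alt {f : H} (hf : f ∈ domN) : Summable fun m : ℕ => (-1 : ℂ) ^ m * f m := by
  refine Summable.of_norm ?_
  refine (summable_norm_of_domN hf).congr fun m => ?_
  rw [norm_mul, norm_pow, norm_neg, norm_one, one_pow, one_mul]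

lemma Bval (n m : ℕ) :
    ((m : ℂ) - n) * A ((n : ℤ) - m) =
      (if m = n then Complex.I else 0) - Complex.I * (-1 : ℂ) ^ n * (-1 : ℂ) ^ m := by
  rcases eq_or_ne m n with rfl | hmn
  · rw [if_pos rfl, sub_self, zero_mul]
    have : (-1 : ℂ) ^ m * (-1 : ℂ) ^ m = 1 := by rw [← mul_pow]; norm_num
    rw [mul_assoc, this, mul_one, sub_self]
  · have hz : (n : ℤ) - m ≠ 0 := by omega
    rw [A, if_neg hz, if_neg hmn]
    have hc : ((n : ℂ) - m) ≠ 0 := by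
      rw [sub_ne_zero]
      exact_mod_cast fun h => hmn ((Nat.cast_injective h).symm)
    have hcast : (((n : ℤ) - m : ℤ) : ℂ) = (n : ℂ) - m := by push_cast; ring
    have hpow : (-1 : ℂ) ^ ((n : ℤ) - (m : ℤ)) = (-1 : ℂ) ^ n * (-1 : ℂ) ^ m := by
      rw [zpow_sub₀ (by norm_num : (-1 : ℂ) ≠ 0), zpow_natCast, zpow_natCast, div_eq_mul_inv]
      congr 1
      exact inv_eq_of_mul_eq_one_left (by rw [← mul_pow]; norm_num)
    rw [hcast, hpow]
    field_simp
    ring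

lemma key_identity (f : H) (hf : f ∈ domN) (n : ℕ) :
    Phi (Nop f hf) n - (n : ℂ) * Phi f n =
      Complex.I * f n - Complex.I * (-1 : ℂ) ^ n * (∑' j : ℕ, (-1 : ℂ) ^ j * f j) := by
  classical
  have h1 : HasSum (fun m : ℕ => A ((n : ℤ) - m) * ((m : ℂ) * f m)) (Phi (Nop f hf) n) :=
    hasSum_Phi (Nop f hf) n
  have h2 : HasSum (fun m : ℕ => (n : ℂ) * (A ((n : ℤ) - m) * f m)) ((n : ℂ) * Phi f n) :=
    (hasSum_Phi f n).mul_left _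
  have h3 := h1.sub h2
  have h4 : HasSum
      (fun m : ℕ => ((if m = n then Complex.I else 0) - Complex.I * (-1 : ℂ) ^ n * (-1 : ℂ) ^ m)
        * f m)
      (Phi (Nop f hf) n - (n : ℂ) * Phi f n) := by
    refine hasSum_congr_fun (fun m => ?_) h3
    rw [← Bval n m]
    ring
  have h5 : HasSum (fun m : ℕ => (if m = n then Complex.I else 0) * f m)
      (Complex.I * f n) := by
    refine hasSum_congr_fun (fun m => ?_) (hasSum_ite_eq n (Complex.I * f n))
    by_cases h : m = n <;> simp [h]
  have h6 : HasSum (fun m : ℕ => Complex.I * (-1 : ℂ) ^ n * ((-1 : ℂ) ^ m * f m))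
      (Complex.I * (-1 : ℂ) ^ n * (∑' j : ℕ, (-1 : ℂ) ^ j * f j)) :=
    ((summable_alt hf).hasSum).mul_left _
  have h7 := h5.sub h6
  refine h4.unique (hasSum_congr_fun (fun m => ?_) h7)
  ring

/-- (Lemma `lem:Heisenberg-necsuff`.) For `f = (c_j) ∈ D(N)` the following are
equivalent: (1) `Φf ∈ D(N)` (so that `f ∈ D([Φ,N])`) and `ΦNf − NΦf = i·f`;
(2) `Σ_j (−1)^j c_j = 0`. -/
theorem heisenberg_iff_alternating_sum_zero (f : H) (hf : f ∈ domN) :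
    (∃ h : Phi f ∈ domN, Phi (Nop f hf) - Nop (Phi f) h = Complex.I • f) ↔
      ∑' j : ℕ, (-1 : ℂ) ^ j * f j = 0 := by
  constructor
  · rintro ⟨h, heq⟩
    have h0 := congrArg (fun x : H => x 0) heq
    simp only at h0
    have hl : (Phi (Nop f hf) - Nop (Phi f) h) 0 = Phi (Nop f hf) 0 - (Nop (Phi f) h) 0 := by
      rw [lp.coeFn_sub]; rfl
    have hr : (Complex.I • f) 0 = Complex.I * f 0 := by
      rw [lp.coeFn_smul]; rfl
    have hN0 : (Nop (Phi f) h) 0 = 0 := by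
      show ((0 : ℕ) : ℂ) * Phi f 0 = 0
      simp
    rw [hl, hN0, hr, sub_zero] at h0
    have hk := key_identity f hf 0
    rw [h0] at hk
    simp only [Nat.cast_zero, zero_mul, pow_zero, mul_one, sub_zero] at hk
    have hIS : Complex.I * (∑' j : ℕ, (-1 : ℂ) ^ j * f j) = 0 := by
      linear_combination hk
    rcases mul_eq_zero.mp hIS with hI | hS
    · exact absurd hI Complex.I_ne_zero
    · exact hS
  · intro hS0
    have hkey : ∀ n : ℕ, Phi (Nop f hf) n - (n : ℂ) * Phi f n = Complex.I * f n := by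
      intro n
      rw [key_identity f hf n, hS0, mul_zero, sub_zero]
    have hfun : (fun n : ℕ => (n : ℂ) * Phi f n) = ⇑(Phi (Nop f hf) - Complex.I • f) := by
      funext n
      rw [lp.coeFn_sub, Pi.sub_apply, lp.coeFn_smul, Pi.smul_apply, smul_eq_mul]
      linear_combination -(hkey n)
    have hmem : Memℓp (fun n : ℕ => (n : ℂ) * Phi f n) 2 := by
      rw [hfun]
      exact lp.memℓp _
    have hdom : Phi f ∈ domN := by
      have hs := hmem.summable (by norm_num : 0 < (2 : ℝ≥0∞).toReal)
      refine hs.congr fun n => ?_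
      have h2 : ((2 : ℝ≥0∞)).toReal = ((2 : ℕ) : ℝ) := by norm_num
      rw [h2, Real.rpow_natCast, norm_mul, mul_pow, Complex.norm_natCast]
      try norm_num
    refine ⟨hdom, ?_⟩
    apply Subtype.ext
    funext n
    show (⇑(Phi (Nop f hf) - Nop (Phi f) hdom)) n = (⇑(Complex.I • f)) n
    rw [lp.coeFn_sub, Pi.sub_apply, lp.coeFn_smul, Pi.smul_apply, smul_eq_mul]
    have hNn : (Nop (Phi f) hdom) n = (n : ℂ) * Phi f n := rfl
    rw [hNn]
    exact hkey n

end GW
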